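/- Let p, q be non-negative integers with p ≤ q + 1, and let α₁, …, α_p, β₁, …, β_q be positive real parameters. Define the polynomials 𝐋_n(x) = ₚ₊₁F_q(−n, α₁, …, α_p; β₁, …, β_q; x) for n ∈ ℤ₊. Then e^t · ₚF_q(α₁, …, α_p; β₁, …, β_q; −xt) = Σ_{n=0}^∞ 𝐋_n(x) tⁿ/n! for all t, x in the open unit disc of ℂ; moreover, if p ≤ q, this identity holds for all t, x ∈ ℂ. -/

import Mathlib

open Finset Filter

/-- Pochhammer symbol `(c)_k = c (c+1) ⋯ (c+k-1)`. -/
noncomputable def poch (c : ℂ) (k : ℕ) : ℂ := ∏ j ∈ Finset.range k, (c + j)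

/-- The polynomials `𝐋_n(x) = ₚ₊₁F_q(-n, α₁,…,α_p; β₁,…,β_q; x)`
(the series terminates since `(-n)_k = 0` for `k > n`). -/
noncomputable def bL (p q : ℕ) (α : Fin p → ℝ) (β : Fin q → ℝ) (n : ℕ) (x : ℂ) : ℂ :=
  ∑' k : ℕ, poch (-(n : ℂ)) k * (∏ i, poch (α i) k) /
      (∏ j, poch (β j) k) * x ^ k / (Nat.factorial k)

noncomputable def pochR (c : ℝ) (k : ℕ) : ℝ := ∏ j ∈ Finset.range k, (c + j)

lemma poch_ofReal (c : ℝ) (k : ℕ) : poch (c : ℂ) k = ((pochR c k : ℝ) : ℂ) := by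
  unfold poch pochR
  push_cast
  rfl

lemma pochR_pos {c : ℝ} (hc : 0 < c) (k : ℕ) : 0 < pochR c k :=
  Finset.prod_pos fun j _ => by positivity

lemma pochR_succ (c : ℝ) (k : ℕ) : pochR c (k + 1) = pochR c k * (c + k) :=
  Finset.prod_range_succ _ _

lemma poch_neg_nat_eq_zero {n k : ℕ} (h : n < k) : poch (-(n : ℂ)) k = 0 :=
  Finset.prod_eq_zero (Finset.mem_range.2 h) (by simp)

lemma poch_neg_nat_mul (n : ℕ) : ∀ k, k ≤ n →
    poch (-(n : ℂ)) k * ((n - k).factorial : ℂ) = (-1) ^ k * (n.factorial : ℂ) := by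
  intro k
  induction k with
  | zero => intro _; simp [poch]
  | succ k ih =>
    intro h
    have hk : k ≤ n := Nat.le_of_succ_le h
    have hsub : n - k = (n - (k + 1)) + 1 := by omega
    have hcast : ((n - k : ℕ) : ℂ) = (n : ℂ) - k := by
      push_cast [Nat.cast_sub hk]; ring
    have hne : ((n - k : ℕ) : ℂ) ≠ 0 := Nat.cast_ne_zero.2 (by omega : n - k ≠ 0)
    have key : poch (-(n : ℂ)) (k + 1) = poch (-(n : ℂ)) k * (-(n : ℂ) + k) :=
      Finset.prod_range_succ _ _
    apply mul_right_cancel₀ hne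
    calc poch (-(n : ℂ)) (k + 1) * ((n - (k + 1)).factorial : ℂ) * ((n - k : ℕ) : ℂ)
        = poch (-(n : ℂ)) k * ((n - k).factorial : ℂ) * (-(n : ℂ) + k) := by
          rw [key, hsub, Nat.factorial_succ]
          push_cast [hsub]
          ring
      _ = (-1) ^ k * (n.factorial : ℂ) * (-(n : ℂ) + k) := by rw [ih hk]
      _ = (-1) ^ (k + 1) * (n.factorial : ℂ) * ((n - k : ℕ) : ℂ) := by
          rw [hcast]; ring

lemma poch_neg_nat (n k : ℕ) (hk : k ≤ n) :
    poch (-(n : ℂ)) k = (-1) ^ k * (n.factorial : ℂ) / ((n - k).factorial : ℂ) := by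
  have h := poch_neg_nat_mul n k hk
  have hne : ((n - k).factorial : ℂ) ≠ 0 := Nat.cast_ne_zero.2 (Nat.factorial_ne_zero _)
  field_simp
  linear_combination h

lemma bL_eq_sum (p q : ℕ) (α : Fin p → ℝ) (β : Fin q → ℝ) (n : ℕ) (x : ℂ) :
    bL p q α β n x = ∑ k ∈ Finset.range (n + 1),
      poch (-(n : ℂ)) k * (∏ i, poch (α i) k) / (∏ j, poch (β j) k) * x ^ k /
        (Nat.factorial k) := by
  refine tsum_eq_sum fun k hk => ?_
  rw [poch_neg_nat_eq_zero (by simpa using hk)]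
  simp

lemma term_eq (n k : ℕ) (hk : k ≤ n) (x t B C : ℂ) :
    poch (-(n : ℂ)) k * B / C * x ^ k / (Nat.factorial k) * t ^ n / (Nat.factorial n)
      = B / C * (-(x * t)) ^ k / (Nat.factorial k) *
        (t ^ (n - k) / ((n - k).factorial : ℂ)) := by
  have ht : t ^ n = t ^ k * t ^ (n - k) := by
    rw [← pow_add]; congr 1; omega
  rw [poch_neg_nat n k hk, ht]
  rcases eq_or_ne C 0 with hC | hC
  · simp [hC]
  have h1 : ((n - k).factorial : ℂ) ≠ 0 := Nat.cast_ne_zero.2 (Nat.factorial_ne_zero _)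
  have h2 : ((k).factorial : ℂ) ≠ 0 := Nat.cast_ne_zero.2 (Nat.factorial_ne_zero _)
  have h3 : ((n).factorial : ℂ) ≠ 0 := Nat.cast_ne_zero.2 (Nat.factorial_ne_zero _)
  field_simp
  ring

lemma tendsto_ratio_one (u v : ℝ) (hv : 0 < v) :
    Tendsto (fun k : ℕ => (u + (k : ℝ)) / (v + k)) atTop (nhds 1) := by
  have hden : Tendsto (fun k : ℕ => v + (k : ℝ)) atTop atTop :=
    tendsto_atTop_add_const_left _ _ tendsto_natCast_atTop_atTop
  have h0 : Tendsto (fun k : ℕ => (u - v) / (v + (k : ℝ))) atTop (nhds 0) :=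
    Tendsto.div_atTop tendsto_const_nhds hden
  have heq : ∀ k : ℕ, (u + (k : ℝ)) / (v + k) = 1 + (u - v) / (v + k) := by
    intro k
    have hne : v + (k : ℝ) ≠ 0 := by positivity
    field_simp
    ring
  simp only [heq]
  simpa using tendsto_const_nhds.add h0

lemma summable_norm_key (p q : ℕ) (hpq : p ≤ q + 1) (α : Fin p → ℝ) (β : Fin q → ℝ)
    (hα : ∀ i, 0 < α i) (hβ : ∀ j, 0 < β j) (z : ℂ)
    (hz : ‖z‖ < 1 ∨ p ≤ q) :
    Summable (fun k : ℕ =>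
      ‖(∏ i, poch (α i) k) / (∏ j, poch (β j) k) * z ^ k / (Nat.factorial k : ℂ)‖) := by
  set F : ℕ → ℝ := fun k =>
    (∏ i, pochR (α i) k) / (∏ j, pochR (β j) k) * ‖z‖ ^ k / (Nat.factorial k)
    with hFdef
  have hNpos : ∀ k, 0 < ∏ i, pochR (α i) k := fun k =>
    Finset.prod_pos fun i _ => pochR_pos (hα i) k
  have hDpos : ∀ k, 0 < ∏ j, pochR (β j) k := fun k =>
    Finset.prod_pos fun j _ => pochR_pos (hβ j) k
  have hFpos : ∀ k, 0 ≤ F k := by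
    intro k
    have := (hNpos k).le
    have := (hDpos k).le
    positivity
  have hnorm : ∀ k, ‖(∏ i, poch (α i) k) / (∏ j, poch (β j) k) * z ^ k /
      (Nat.factorial k : ℂ)‖ = F k := by
    intro k
    have hA : (∏ i, poch ((α i : ℝ) : ℂ) k) = ((∏ i, pochR (α i) k : ℝ) : ℂ) := by
      rw [Complex.ofReal_prod]
      exact Finset.prod_congr rfl fun i _ => poch_ofReal _ _
    have hB : (∏ j, poch ((β j : ℝ) : ℂ) k) = ((∏ j, pochR (β j) k : ℝ) : ℂ) := by
      rw [Complex.ofReal_prod]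
      exact Finset.prod_congr rfl fun j _ => poch_ofReal _ _
    rw [hA, hB]
    simp only [norm_div, norm_mul, norm_pow, Complex.norm_real, Real.norm_eq_abs,
      Complex.norm_natCast]
    rw [abs_of_pos (hNpos k), abs_of_pos (hDpos k)]
  rw [show (fun k : ℕ =>
      ‖(∏ i, poch (α i) k) / (∏ j, poch (β j) k) * z ^ k / (Nat.factorial k : ℂ)‖) = F
    from funext hnorm]
  -- the step ratio
  set h : ℕ → ℝ := fun k =>
    (∏ i, (α i + (k : ℝ))) / (((k : ℝ) + 1) * ∏ j, (β j + (k : ℝ))) with hhdef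
  have hstep : ∀ k, F (k + 1) = F k * (h k * ‖z‖) := by
    intro k
    have e1 : (∏ i, pochR (α i) (k + 1)) = (∏ i, pochR (α i) k) * ∏ i, (α i + (k : ℝ)) := by
      rw [← Finset.prod_mul_distrib]
      exact Finset.prod_congr rfl fun i _ => pochR_succ _ _
    have e2 : (∏ j, pochR (β j) (k + 1)) = (∏ j, pochR (β j) k) * ∏ j, (β j + (k : ℝ)) := by
      rw [← Finset.prod_mul_distrib]
      exact Finset.prod_congr rfl fun j _ => pochR_succ _ _
    have hbpos : (0:ℝ) < ∏ j, (β j + (k : ℝ)) :=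
      Finset.prod_pos fun j _ => by have := hβ j; positivity
    have hfac : ((k + 1).factorial : ℝ) = ((k : ℝ) + 1) * (k.factorial : ℝ) := by
      rw [Nat.factorial_succ]; push_cast; ring
    have hD := (hDpos k).ne'
    have hb := hbpos.ne'
    have hfacne : ((k : ℕ).factorial : ℝ) ≠ 0 := Nat.cast_ne_zero.2 (Nat.factorial_ne_zero _)
    have hk1 : ((k : ℝ) + 1) ≠ 0 := by positivity
    simp only [hFdef, hhdef, e1, e2, hfac, pow_succ]
    field_simp
  -- limit of the ratio
  have hratio : ∃ L : ℝ, 0 ≤ L ∧ L < 1 ∧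
      Tendsto (fun k : ℕ => h k * ‖z‖) atTop (nhds L) := by
    classical
    set a : ℕ → ℝ := fun i => if hi : i < p then α ⟨i, hi⟩ else 1 with hadef
    set b : ℕ → ℝ := fun j => if hj : j < q then β ⟨j, hj⟩ else 1 with hbdef
    have hapos : ∀ i, 0 < a i := by
      intro i; simp only [hadef]; split
      · exact hα _
      · norm_num
    have hbpos : ∀ j, 0 < b j := by
      intro j; simp only [hbdef]; split
      · exact hβ _
      · norm_num
    have hnum : ∀ k : ℕ, (∏ i, (α i + (k : ℝ))) = ∏ i ∈ range p, (a i + (k : ℝ)) := by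
      intro k
      rw [← Fin.prod_univ_eq_prod_range (fun i => a i + (k : ℝ)) p]
      exact Finset.prod_congr rfl fun i _ => by simp [hadef, i.isLt]
    have hden : ∀ k : ℕ, ((k : ℝ) + 1) * ∏ j, (β j + (k : ℝ))
        = ∏ j ∈ range (q + 1), (b j + (k : ℝ)) := by
      intro k
      rw [Finset.prod_range_succ, ← Fin.prod_univ_eq_prod_range (fun j => b j + (k : ℝ)) q]
      have h1 : (∏ j : Fin q, (b (j : ℕ) + (k : ℝ))) = ∏ j : Fin q, (β j + (k : ℝ)) :=
        Finset.prod_congr rfl fun j _ => by simp [hbdef, j.isLt]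
      have h2 : b q = 1 := by simp [hbdef]
      rw [h1, h2]
      ring
    have hsplit : ∀ k : ℕ, h k = (∏ i ∈ range p, (a i + (k : ℝ)) / (b i + (k : ℝ)))
        * (∏ j ∈ Finset.Ico p (q + 1), (b j + (k : ℝ)))⁻¹ := by
      intro k
      rw [hhdef]
      simp only
      rw [hnum k, hden k, ← Finset.prod_range_mul_prod_Ico _ hpq, Finset.prod_div_distrib]
      have h1 : (0:ℝ) < ∏ i ∈ range p, (b i + (k : ℝ)) :=
        Finset.prod_pos fun i _ => by have := hbpos i; positivity
      field_simp
    have hG : Tendsto (fun k : ℕ => ∏ i ∈ range p, (a i + (k : ℝ)) / (b i + (k : ℝ)))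
        atTop (nhds 1) := by
      have := tendsto_finset_prod (range p)
        (fun i (_ : i ∈ range p) => tendsto_ratio_one (a i) (b i) (hbpos i))
      simpa using this
    by_cases hpq' : p ≤ q
    · refine ⟨0, le_refl 0, one_pos, ?_⟩
      have hI : Tendsto (fun k : ℕ => (∏ j ∈ Finset.Ico p (q + 1), (b j + (k : ℝ)))⁻¹)
          atTop (nhds 0) := by
        have hmem : p ∈ Finset.Ico p (q + 1) := Finset.mem_Ico.2 ⟨le_refl p, by omega⟩
        have hIb : Tendsto (fun k : ℕ => (b p + (k : ℝ))⁻¹) atTop (nhds 0) := by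
          have : Tendsto (fun k : ℕ => b p + (k : ℝ)) atTop atTop :=
            tendsto_atTop_add_const_left _ _ tendsto_natCast_atTop_atTop
          exact this.inv_tendsto_atTop
        refine squeeze_zero' ?_ ?_ hIb
        · filter_upwards with k
          have : (0:ℝ) < ∏ j ∈ Finset.Ico p (q + 1), (b j + (k : ℝ)) :=
            Finset.prod_pos fun j _ => by have := hbpos j; positivity
          positivity
        · filter_upwards [eventually_ge_atTop 1] with k hk1
          have hone : ∀ j ∈ Finset.Ico p (q + 1), (1:ℝ) ≤ b j + (k : ℝ) := by
            intro j _
            have := hbpos j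
            have : (1:ℝ) ≤ (k : ℝ) := by exact_mod_cast hk1
            linarith [hbpos j]
          have hprodif : (∏ j ∈ Finset.Ico p (q + 1),
              (if j = p then b p + (k : ℝ) else 1)) = b p + (k : ℝ) := by
            rw [Finset.prod_ite_eq' (Finset.Ico p (q + 1)) p
              (fun _ => b p + (k : ℝ)), if_pos hmem]
          have hle : b p + (k : ℝ) ≤ ∏ j ∈ Finset.Ico p (q + 1), (b j + (k : ℝ)) := by
            rw [← hprodif]
            refine Finset.prod_le_prod (fun j _ => ?_) (fun j hj => ?_)
            · by_cases hjp : j = p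
              · simp only [if_pos hjp]
                have := hbpos p; positivity
              · simp [hjp]
            · by_cases hjp : j = p
              · subst hjp; simp
              · simp only [if_neg hjp]
                exact hone j hj
          have hbp : (0:ℝ) < b p + (k : ℝ) := by have := hbpos p; positivity
          exact inv_anti₀ hbp hle
      have h2 := (hG.mul hI).mul
        (tendsto_const_nhds : Tendsto (fun _ : ℕ => ‖z‖) atTop (nhds (‖z‖)))
      simp only [one_mul, zero_mul, mul_zero] at h2
      exact Tendsto.congr (fun k => by rw [hsplit k]) h2
    · -- p = q + 1
      have hpq2 : p = q + 1 := by omega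
      have habs : ‖z‖ < 1 := hz.resolve_right hpq'
      refine ⟨‖z‖, norm_nonneg z, habs, ?_⟩
      have hI : ∀ k : ℕ, (∏ j ∈ Finset.Ico p (q + 1), (b j + (k : ℝ)))⁻¹ = 1 := by
        intro k
        rw [hpq2, Finset.Ico_self, Finset.prod_empty, inv_one]
      have h2 := hG.mul
        (tendsto_const_nhds : Tendsto (fun _ : ℕ => ‖z‖) atTop (nhds (‖z‖)))
      rw [one_mul] at h2
      refine Tendsto.congr (fun k => ?_) h2
      rw [hsplit k, hI k, mul_one]
  obtain ⟨L, hL0, hL1, hLt⟩ := hratio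
  set r : ℝ := (L + 1) / 2 with hrdef
  have hr1 : r < 1 := by rw [hrdef]; linarith
  have hLr : L < r := by rw [hrdef]; linarith
  refine summable_of_ratio_norm_eventually_le hr1 ?_
  filter_upwards [hLt.eventually_le_const hLr] with k hk
  rw [Real.norm_of_nonneg (hFpos _), Real.norm_of_nonneg (hFpos _), hstep k]
  calc F k * (h k * ‖z‖) ≤ F k * r := mul_le_mul_of_nonneg_left hk (hFpos k)
    _ = r * F k := mul_comm _ _

lemma key_hasSum (p q : ℕ) (hpq : p ≤ q + 1) (α : Fin p → ℝ) (β : Fin q → ℝ)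
    (hα : ∀ i, 0 < α i) (hβ : ∀ j, 0 < β j) (t x : ℂ)
    (h : ‖(x * t)‖ < 1 ∨ p ≤ q) :
    HasSum (fun n : ℕ => bL p q α β n x * t ^ n / (Nat.factorial n))
      (Complex.exp t *
        ∑' k : ℕ, (∏ i, poch (α i) k) / (∏ j, poch (β j) k) * (-(x*t)) ^ k /
          (Nat.factorial k)) := by
  set c : ℕ → ℂ := fun k =>
    (∏ i, poch (α i) k) / (∏ j, poch (β j) k) * (-(x * t)) ^ k / (Nat.factorial k)
    with hcdef
  set d : ℕ → ℂ := fun m => t ^ m / (Nat.factorial m) with hddef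
  have hz : ‖(-(x * t))‖ < 1 ∨ p ≤ q := by simpa using h
  have hc : Summable fun k => ‖c k‖ := by
    simpa [hcdef] using summable_norm_key p q hpq α β hα hβ (-(x * t)) hz
  have hd : Summable fun m => ‖d m‖ := by
    have := Real.summable_pow_div_factorial (‖t‖)
    refine this.congr fun m => ?_
    simp [hddef, norm_div, norm_pow, Complex.norm_natCast]
  have H := hasSum_sum_range_mul_of_summable_norm hd hc
  have hexp : (∑' m, d m) = Complex.exp t := by
    rw [Complex.exp_eq_exp_ℂ]
    exact (NormedSpace.expSeries_div_hasSum_exp t).tsum_eq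
  rw [hexp] at H
  have hfun : (fun n : ℕ => bL p q α β n x * t ^ n / (Nat.factorial n))
      = fun n : ℕ => ∑ k ∈ range (n + 1), d k * c (n - k) := by
    funext n
    have hre : (∑ k ∈ range (n + 1), d k * c (n - k))
        = ∑ k ∈ range (n + 1), d (n - k) * c k := by
      rw [← Finset.sum_range_reflect (fun k => d k * c (n - k)) (n + 1)]
      refine Finset.sum_congr rfl fun k hk => ?_
      have hk' : k ≤ n := by simpa [Nat.lt_succ_iff] using hk
      congr 2 <;> omega
    rw [hre, bL_eq_sum, Finset.sum_mul, Finset.sum_div]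
    refine Finset.sum_congr rfl fun k hk => ?_
    have hk' : k ≤ n := by simpa [Nat.lt_succ_iff] using hk
    rw [term_eq n k hk' x t _ _]
    simp only [hcdef, hddef]
    ring
  rw [hfun]
  exact H

theorem stmt_2 (p q : ℕ) (hpq : p ≤ q + 1) (α : Fin p → ℝ) (β : Fin q → ℝ)
    (hα : ∀ i, 0 < α i) (hβ : ∀ j, 0 < β j) :
    (∀ t x : ℂ, ‖t‖ < 1 → ‖x‖ < 1 →
      HasSum (fun n : ℕ => bL p q α β n x * t ^ n / (Nat.factorial n))
        (Complex.exp t *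
          ∑' k : ℕ, (∏ i, poch (α i) k) / (∏ j, poch (β j) k) * (-(x*t)) ^ k /
            (Nat.factorial k)))
    ∧ (p ≤ q → ∀ t x : ℂ,
      HasSum (fun n : ℕ => bL p q α β n x * t ^ n / (Nat.factorial n))
        (Complex.exp t *
          ∑' k : ℕ, (∏ i, poch (α i) k) / (∏ j, poch (β j) k) * (-(x*t)) ^ k /
            (Nat.factorial k))) := by
  constructor
  · intro t x ht hx
    refine key_hasSum p q hpq α β hα hβ t x (Or.inl ?_)
    rw [norm_mul]
    calc ‖x‖ * ‖t‖ ≤ ‖x‖ * 1 :=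
          mul_le_mul_of_nonneg_left ht.le (norm_nonneg x)
      _ = ‖x‖ := mul_one _
      _ < 1 := hx
  · intro hpq' t x
    exact key_hasSum p q hpq α β hα hβ t x (Or.inr hpq')
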